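/- Let G be a finite simple graph, A ⊆ V(G), and d ≥ 1 an integer, and write r = ρ_G(A) and U = U_G(A). Then the number of equivalence classes of the d-neighbor equivalence relation ≡^d_A on subsets of A is at most 2^{d·r² + r}, and also at most U^{d·log₂U + 1} (the paper's Lemma states these bounds as 2^{d·ρ_G(A)²} and 2^{d·β_G(A)²}). -/

import Mathlib

open Classical in
/-- The cut matrix of `A`: rows indexed by `A`, columns by its complement, over GF(2),
with `(x,y)` entry `1` iff `x` and `y` are adjacent. -/
noncomputable def cutMatrix {V : Type*} [Fintype V] [DecidableEq V]
    (G : SimpleGraph V) (A : Finset V) : Matrix ↥A ↥(Aᶜ) (ZMod 2) :=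
  Matrix.of fun x y => if G.Adj x.1 y.1 then 1 else 0

/-- The cut-rank `ρ_G(A)`: the GF(2)-rank of the cut matrix of `A`. -/
noncomputable def cutRank {V : Type*} [Fintype V] [DecidableEq V]
    (G : SimpleGraph V) (A : Finset V) : ℕ :=
  (cutMatrix G A).rank

/-- The union-count `U_G(A)`: the number of distinct sets `N(Y) \ A` over `Y ⊆ A`. -/
noncomputable def unionCount {V : Type*} [Fintype V] [DecidableEq V]
    (G : SimpleGraph V) (A : Finset V) : ℕ :=
  Set.ncard {S : Set V | ∃ Y : Set V, Y ⊆ ↑A ∧ (⋃ y ∈ Y, G.neighborSet y) \ ↑A = S}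

/-- `nss_G(A)`: the number of distinct GF(2)-linear spans of subsets of rows of the
cut matrix of `A`. -/
noncomputable def nss {V : Type*} [Fintype V] [DecidableEq V]
    (G : SimpleGraph V) (A : Finset V) : ℕ :=
  Set.ncard {W : Submodule (ZMod 2) (↥(Aᶜ) → ZMod 2) |
    ∃ S : Set ↥A, W = Submodule.span (ZMod 2) ((fun x => cutMatrix G A x) '' S)}

/-- `d`-neighbor equivalence with respect to `A`: `X ≡^d_A X'` iff every vertex
outside `A` has the same number of neighbors in `X` as in `X'`, counted up to `d`. -/
def dNbEquiv {V : Type*} [Fintype V] [DecidableEq V]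
    (G : SimpleGraph V) (A : Finset V) (d : ℕ) (X X' : Finset V) : Prop :=
  ∀ v : V, v ∉ A →
    min (Set.ncard (↑X ∩ G.neighborSet v)) d =
      min (Set.ncard (↑X' ∩ G.neighborSet v)) d

/-- The number of equivalence classes of the `d`-neighbor equivalence relation
`≡^d_A` on the subsets of `A`. -/
noncomputable def numDNbClasses {V : Type*} [Fintype V] [DecidableEq V]
    (G : SimpleGraph V) (A : Finset V) (d : ℕ) : ℕ :=
  Set.ncard {C : Set (Finset V) |
    ∃ X : Finset V, X ⊆ A ∧ C = {X' : Finset V | X' ⊆ A ∧ dNbEquiv G A d X X'}}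

/-! ### Auxiliary machinery -/

section Aux

lemma aux_multisets_finite {α : Type*} [DecidableEq α] (S : Finset α) (k : ℕ) :
    {m : Multiset α | Multiset.card m = k ∧ ∀ x ∈ m, x ∈ S}.Finite := by
  apply Set.Finite.subset (Set.finite_Iic (k • S.val))
  rintro m ⟨hc, hmem⟩
  simp only [Set.mem_Iic, Multiset.le_iff_count]
  intro a
  by_cases ha : a ∈ m
  · have h1 : m.count a ≤ k := hc ▸ Multiset.count_le_card a m
    have h2 : 1 ≤ S.val.count a := Multiset.count_pos.mpr (hmem a ha)
    calc m.count a ≤ k := h1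
      _ ≤ k * S.val.count a := Nat.le_mul_of_pos_right k h2
      _ = (k • S.val).count a := (Multiset.count_nsmul a k S.val).symm
  · simp [Multiset.count_eq_zero_of_notMem ha]

lemma aux_ncard_multisets_le {α : Type*} [DecidableEq α] (S : Finset α) : ∀ (k : ℕ),
    Set.ncard {m : Multiset α | Multiset.card m = k ∧ ∀ x ∈ m, x ∈ S} ≤ S.card ^ k := by
  intro k
  induction k with
  | zero =>
    have : {m : Multiset α | Multiset.card m = 0 ∧ ∀ x ∈ m, x ∈ S} ⊆ {(0 : Multiset α)} := by
      rintro m ⟨hm, -⟩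
      simp only [Multiset.card_eq_zero] at hm
      simp [hm]
    simpa using Set.ncard_le_ncard this (Set.finite_singleton _)
  | succ k ih =>
    rcases Set.eq_empty_or_nonempty
      {m : Multiset α | Multiset.card m = k + 1 ∧ ∀ x ∈ m, x ∈ S} with he | ⟨m0, hm0⟩
    · rw [he]; simp
    have hm0ne : m0 ≠ 0 := by
      intro h; rw [h] at hm0; simp at hm0
    obtain ⟨a0, -⟩ := Multiset.exists_mem_of_ne_zero hm0ne
    set t := (aux_multisets_finite S k).toFinset with ht
    set f : Multiset α → α × Multiset α :=
      fun m => if h : m.toList = [] then (a0, 0) else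
        (m.toList.head h, m.erase (m.toList.head h)) with hf
    have key : ∀ m ∈ {m : Multiset α | Multiset.card m = k + 1 ∧ ∀ x ∈ m, x ∈ S},
        ∃ h : m.toList ≠ [], m.toList.head h ∈ m ∧
          f m = (m.toList.head h, m.erase (m.toList.head h)) := by
      rintro m ⟨hc, -⟩
      have hne : m.toList ≠ [] := by
        simp only [ne_eq, Multiset.toList_eq_nil]
        intro h; rw [h] at hc; simp at hc
      refine ⟨hne, ?_, by rw [hf]; exact dif_neg hne⟩
      have := List.head_mem hne
      rwa [Multiset.mem_toList] at this
    have hle : Set.ncard {m : Multiset α | Multiset.card m = k + 1 ∧ ∀ x ∈ m, x ∈ S}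
        ≤ ((S ×ˢ t : Finset (α × Multiset α)) : Set (α × Multiset α)).ncard := by
      refine Set.ncard_le_ncard_of_injOn f ?_ ?_ (by exact (S ×ˢ t).finite_toSet)
      · rintro m hm
        obtain ⟨hc, hmem⟩ := hm
        obtain ⟨hne, hhead, hfm⟩ := key m ⟨hc, hmem⟩
        rw [hfm]
        simp only [Finset.coe_product, Set.mem_prod]
        refine ⟨hmem _ hhead, ?_⟩
        rw [ht]
        simp only [Set.Finite.coe_toFinset, Set.mem_setOf_eq]
        constructor
        · rw [Multiset.card_erase_of_mem hhead, hc]; rfl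
        · intro x hx; exact hmem x (Multiset.mem_of_mem_erase hx)
      · rintro m hm m' hm' hEq
        obtain ⟨hne, hhead, hfm⟩ := key m hm
        obtain ⟨hne', hhead', hfm'⟩ := key m' hm'
        rw [hfm, hfm'] at hEq
        have e1 : m.toList.head hne = m'.toList.head hne' := congrArg Prod.fst hEq
        have e2 : m.erase (m.toList.head hne) = m'.erase (m'.toList.head hne') :=
          congrArg Prod.snd hEq
        calc m = m.toList.head hne ::ₘ m.erase (m.toList.head hne) :=
              (Multiset.cons_erase hhead).symm
          _ = m'.toList.head hne' ::ₘ m'.erase (m'.toList.head hne') := by rw [e2, e1]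
          _ = m' := Multiset.cons_erase hhead'
    calc Set.ncard {m : Multiset α | Multiset.card m = k + 1 ∧ ∀ x ∈ m, x ∈ S}
        ≤ _ := hle
      _ = (S ×ˢ t).card := Set.ncard_coe_finset _
      _ = S.card * t.card := Finset.card_product S t
      _ ≤ S.card * S.card ^ k := by
          apply Nat.mul_le_mul_left
          rw [ht, ← Set.ncard_eq_toFinset_card _ (aux_multisets_finite S k)]
          exact ih
      _ = S.card ^ (k+1) := by ring

lemma aux_ncard_image_le_image_of_refines {α β γ : Type*} (s : Set α) (hs : s.Finite)
    (F : α → β) (E : α → γ)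
    (h : ∀ x ∈ s, ∀ y ∈ s, E x = E y → F x = F y) :
    (F '' s).ncard ≤ (E '' s).ncard := by
  classical
  rcases s.eq_empty_or_nonempty with rfl | ⟨a0, ha0⟩
  · simp
  set g : γ → β := fun c => if hc : ∃ x ∈ s, E x = c then F hc.choose else F a0 with hg
  have hsub : F '' s ⊆ g '' (E '' s) := by
    rintro b ⟨x, hx, rfl⟩
    refine ⟨E x, ⟨x, hx, rfl⟩, ?_⟩
    have hc : ∃ y ∈ s, E y = E x := ⟨x, hx, rfl⟩
    simp only [hg, dif_pos hc]
    exact h _ hc.choose_spec.1 _ hx hc.choose_spec.2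
  calc (F '' s).ncard ≤ (g '' (E '' s)).ncard :=
        Set.ncard_le_ncard hsub ((hs.image E).image g)
    _ ≤ (E '' s).ncard := Set.ncard_image_le (hs.image E)

lemma aux_min_sum_cap {W : Type*} (s : Finset W) (n a : W → ℕ) (ha : ∀ w, a w ≤ 1) (d : ℕ) :
    min (∑ w ∈ s, n w * a w) d = min (∑ w ∈ s, min (n w) d * a w) d := by
  by_cases h : ∃ w ∈ s, a w = 1 ∧ d ≤ n w
  · obtain ⟨w, hw, haw, hnw⟩ := h
    rw [min_eq_right, min_eq_right]
    · calc d ≤ min (n w) d * a w := by rw [haw, mul_one]; omega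
        _ ≤ ∑ w ∈ s, min (n w) d * a w :=
          Finset.single_le_sum (f := fun w => min (n w) d * a w)
            (fun _ _ => Nat.zero_le _) hw
    · calc d ≤ n w * a w := by rw [haw, mul_one]; exact hnw
        _ ≤ ∑ w ∈ s, n w * a w :=
          Finset.single_le_sum (f := fun w => n w * a w)
            (fun _ _ => Nat.zero_le _) hw
  · push_neg at h
    congr 1
    apply Finset.sum_congr rfl
    intro w hw
    have haw := ha w
    have := h w hw
    rcases Nat.lt_or_ge (n w) d with h1 | h1
    · rw [min_eq_left (le_of_lt h1)]
    · have haw0 : a w = 0 := by omega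
      simp [haw0]

lemma aux_card_finsum {W ι : Type*} (s : Finset ι) (f : ι → Multiset W) :
    Multiset.card (∑ i ∈ s, f i) = ∑ i ∈ s, Multiset.card (f i) := by
  classical
  induction s using Finset.induction_on with
  | empty => simp
  | @insert a s' h ih => rw [Finset.sum_insert h, Finset.sum_insert h,
      Multiset.card_add, ih]

end Aux

section Graph

open Classical

variable {V : Type*} [Fintype V] [DecidableEq V]

/-- Signature of `X`: the capped neighbor counts outside `A`. -/
noncomputable def sigFn (G : SimpleGraph V) (A : Finset V) (d : ℕ) (X : Finset V) : V → ℕ :=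
  fun v => if v ∈ A then 0 else min ((↑X ∩ G.neighborSet v).ncard) d

/-- Row of the cut matrix for an arbitrary vertex. -/
noncomputable def rowFn (G : SimpleGraph V) (A : Finset V) (x : V) : ↥(Aᶜ) → ZMod 2 :=
  fun v => if G.Adj x ↑v then 1 else 0

/-- Capped row-multiplicity function of `X` (the zero row is discarded). -/
noncomputable def countFn (G : SimpleGraph V) (A : Finset V) (d : ℕ) (X : Finset V) :
    (↥(Aᶜ) → ZMod 2) → ℕ :=
  fun w => if w = 0 then 0 else min ((X.filter (fun x => rowFn G A x = w)).card) d

lemma dNbEquiv_iff_sig (G : SimpleGraph V) (A : Finset V) (d : ℕ) (X X' : Finset V) :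
    dNbEquiv G A d X X' ↔ sigFn G A d X = sigFn G A d X' := by
  constructor
  · intro h
    funext v
    by_cases hv : v ∈ A
    · simp [sigFn, hv]
    · simpa [sigFn, hv] using h v hv
  · intro h v hv
    have := congrFun h v
    simpa [sigFn, hv] using this

lemma ncard_inter_eq (G : SimpleGraph V) (v : V) (X : Finset V) :
    (↑X ∩ G.neighborSet v).ncard = (X.filter (fun x => G.Adj v x)).card := by
  rw [← Set.ncard_coe_finset]
  congr 1
  ext y
  simp [SimpleGraph.mem_neighborSet]

lemma sig_eq_min_sum (G : SimpleGraph V) (A : Finset V) (d : ℕ) (X : Finset V)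
    {v : V} (hv : v ∉ A) :
    sigFn G A d X v
      = min (∑ x ∈ X, (rowFn G A x ⟨v, Finset.mem_compl.mpr hv⟩).val) d := by
  rw [sigFn]
  rw [if_neg hv, ncard_inter_eq]
  congr 1
  rw [Finset.card_filter]
  apply Finset.sum_congr rfl
  intro x hx
  rw [rowFn]
  by_cases h : G.Adj v x
  · rw [if_pos h, if_pos ((SimpleGraph.adj_comm G v x).mp h), ZMod.val_one]
  · rw [if_neg h, if_neg (fun hc => h ((SimpleGraph.adj_comm G x v).mp hc)), ZMod.val_zero]

set_option maxHeartbeats 2000000 in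
lemma sig_eq_of_countFn_eq (G : SimpleGraph V) (A : Finset V) (d : ℕ) (X X' : Finset V)
    (h : countFn G A d X = countFn G A d X') : sigFn G A d X = sigFn G A d X' := by
  classical
  funext v
  by_cases hv : v ∈ A
  · simp [sigFn, hv]
  · have key : ∀ Y : Finset V, sigFn G A d Y v
        = min (∑ w : (↥(Aᶜ) → ZMod 2),
            countFn G A d Y w * (w ⟨v, Finset.mem_compl.mpr hv⟩).val) d := by
      intro Y
      set vv : ↥(Aᶜ) := ⟨v, Finset.mem_compl.mpr hv⟩ with hvv
      rw [sig_eq_min_sum G A d Y hv, ← hvv]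
      rw [Finset.sum_comp (fun w : ↥(Aᶜ) → ZMod 2 => (w vv).val) (rowFn G A)]
      rw [Finset.sum_subset (Finset.subset_univ (Y.image (rowFn G A)))
        (by
          intro w _ hw
          have : (Y.filter (fun x => rowFn G A x = w)) = ∅ := by
            apply Finset.filter_eq_empty_iff.mpr
            intro x hx hc
            exact hw (Finset.mem_image.mpr ⟨x, hx, hc⟩)
          simp [this])]
      simp only [smul_eq_mul]
      rw [aux_min_sum_cap Finset.univ
        (fun w => (Y.filter (fun x => rowFn G A x = w)).card)
        (fun w => (w vv).val)
        (fun w => Nat.lt_succ_iff.mp (ZMod.val_lt _)) d]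
      congr 1
      apply Finset.sum_congr rfl
      intro w _
      by_cases hw0 : w = 0
      · subst hw0
        simp [countFn]
      · rw [countFn]
        rw [if_neg hw0]
    rw [key X, key X', h]

lemma unionCount_ne_zero (G : SimpleGraph V) (A : Finset V) : unionCount G A ≠ 0 := by
  have hne : {S : Set V | ∃ Y : Set V, Y ⊆ ↑A ∧ (⋃ y ∈ Y, G.neighborSet y) \ ↑A = S}.Nonempty :=
    ⟨(⋃ y ∈ (∅ : Set V), G.neighborSet y) \ ↑A, ∅, Set.empty_subset _, rfl⟩
  have hfin := Set.toFinite
    {S : Set V | ∃ Y : Set V, Y ⊆ ↑A ∧ (⋃ y ∈ Y, G.neighborSet y) \ ↑A = S}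
  have := (Set.ncard_pos hfin).mpr hne
  unfold unionCount
  omega

set_option maxHeartbeats 2000000 in
lemma exists_small_rep (G : SimpleGraph V) (A : Finset V) (d : ℕ) (X : Finset V) (hX : X ⊆ A) :
    ∃ X' : Finset V, X' ⊆ A ∧ sigFn G A d X' = sigFn G A d X ∧
      X'.card ≤ d * min (cutRank G A) (Nat.log 2 (unionCount G A)) := by
  classical
  obtain ⟨X', hX'mem, hmin⟩ := Finset.exists_min_image
    ((X.powerset).filter (fun Y => sigFn G A d Y = sigFn G A d X)) Finset.card
    ⟨X, by simp [Finset.mem_filter, Finset.mem_powerset]⟩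
  rw [Finset.mem_filter, Finset.mem_powerset] at hX'mem
  obtain ⟨hX'sub, hX'sig⟩ := hX'mem
  have hX'A : X' ⊆ A := hX'sub.trans hX
  refine ⟨X', hX'A, hX'sig, ?_⟩
  rcases X'.eq_empty_or_nonempty with rfl | ⟨x0, hx0⟩
  · simp
  have hminc : ∀ Y, Y ⊆ X → sigFn G A d Y = sigFn G A d X → X'.card ≤ Y.card := by
    intro Y h1 h2
    exact hmin Y (by rw [Finset.mem_filter, Finset.mem_powerset]; exact ⟨h1, h2⟩)
  -- every element of the minimal representative has a witness
  have witEx : ∀ x ∈ X', ∃ v : V, v ∉ A ∧ G.Adj v x ∧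
      (X'.filter (fun y => G.Adj v y)).card ≤ d := by
    intro x hx
    have hcard : ¬ (X'.card ≤ (X'.erase x).card) := by
      have h1 := Finset.card_erase_of_mem hx
      have h2 : 1 ≤ X'.card := Finset.card_pos.mpr ⟨x, hx⟩
      omega
    have hneq : sigFn G A d (X'.erase x) ≠ sigFn G A d X' := by
      intro hEq
      exact hcard (hminc _ ((Finset.erase_subset x X').trans hX'sub) (hEq.trans hX'sig))
    obtain ⟨v, hv⟩ := Function.ne_iff.mp hneq
    by_cases hvA : v ∈ A
    · exact absurd (by simp [sigFn, hvA]) hv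
    have hv' : min ((X'.filter (fun y => G.Adj v y)).erase x).card d
        ≠ min (X'.filter (fun y => G.Adj v y)).card d := by
      intro hEq
      apply hv
      simp only [sigFn, if_neg hvA, ncard_inter_eq]
      rw [Finset.filter_erase]
      exact hEq
    have hadj : G.Adj v x := by
      by_contra hna
      apply hv'
      rw [Finset.erase_eq_of_notMem (by simp [hna])]
    have hle : (X'.filter (fun y => G.Adj v y)).card ≤ d := by
      by_contra hgt
      push_neg at hgt
      have hxmem : x ∈ X'.filter (fun y => G.Adj v y) := Finset.mem_filter.mpr ⟨hx, hadj⟩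
      apply hv'
      rw [Finset.card_erase_of_mem hxmem]
      rw [min_eq_right (by omega), min_eq_right (by omega)]
    exact ⟨v, hvA, hadj, hle⟩
  have witEx' : ∀ x : V, ∃ v : V, x ∈ X' → (v ∉ A ∧ G.Adj v x ∧
      (X'.filter (fun y => G.Adj v y)).card ≤ d) := by
    intro x
    by_cases hx : x ∈ X'
    · obtain ⟨v, h⟩ := witEx x hx; exact ⟨v, fun _ => h⟩
    · exact ⟨x0, fun h => absurd h hx⟩
  choose wit hwit using witEx'
  set T := X'.image wit with hT
  have Tprop : ∀ v ∈ T, v ∉ A ∧ (X'.filter (fun y => G.Adj v y)).card ≤ d := by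
    intro v hv
    obtain ⟨x, hx, rfl⟩ := Finset.mem_image.mp hv
    exact ⟨(hwit x hx).1, (hwit x hx).2.2⟩
  have Tcov : ∀ x ∈ X', ∃ c ∈ T, G.Adj c x :=
    fun x hx => ⟨wit x, Finset.mem_image_of_mem _ hx, (hwit x hx).2.1⟩
  obtain ⟨C, hCmem, hCmin⟩ := Finset.exists_min_image
    (T.powerset.filter (fun C => ∀ x ∈ X', ∃ c ∈ C, G.Adj c x)) Finset.card
    ⟨T, by rw [Finset.mem_filter, Finset.mem_powerset]; exact ⟨Finset.Subset.refl _, Tcov⟩⟩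
  rw [Finset.mem_filter, Finset.mem_powerset] at hCmem
  obtain ⟨hCT, hCcov⟩ := hCmem
  have hCminc : ∀ C', C' ⊆ T → (∀ x ∈ X', ∃ c ∈ C', G.Adj c x) → C.card ≤ C'.card := by
    intro C' h1 h2
    exact hCmin C' (by rw [Finset.mem_filter, Finset.mem_powerset]; exact ⟨h1, h2⟩)
  have hCnA : ∀ c ∈ C, c ∉ A := fun c hc => (Tprop c (hCT hc)).1
  have hCd : ∀ c ∈ C, (X'.filter (fun y => G.Adj c y)).card ≤ d :=
    fun c hc => (Tprop c (hCT hc)).2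
  have priv : ∀ c ∈ C, ∃ x ∈ X', G.Adj c x ∧ ∀ c' ∈ C, c' ≠ c → ¬ G.Adj c' x := by
    intro c hc
    by_contra hnone
    push_neg at hnone
    have hcov' : ∀ x ∈ X', ∃ c' ∈ C.erase c, G.Adj c' x := by
      intro x hx
      obtain ⟨c₀, hc₀, hadj⟩ := hCcov x hx
      by_cases hcc : c₀ = c
      · subst hcc
        obtain ⟨c', hc', hne, hadj'⟩ := hnone x hx hadj
        exact ⟨c', Finset.mem_erase.mpr ⟨hne, hc'⟩, hadj'⟩
      · exact ⟨c₀, Finset.mem_erase.mpr ⟨hcc, hc₀⟩, hadj⟩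
    have h1 := hCminc _ ((Finset.erase_subset c C).trans hCT) hcov'
    have h2 := Finset.card_erase_of_mem hc
    have h3 : 1 ≤ C.card := Finset.card_pos.mpr ⟨c, hc⟩
    omega
  have priv' : ∀ c : V, ∃ x : V, c ∈ C → (x ∈ X' ∧ G.Adj c x ∧
      ∀ c' ∈ C, c' ≠ c → ¬ G.Adj c' x) := by
    intro c
    by_cases hc : c ∈ C
    · obtain ⟨x, hx, h⟩ := priv c hc; exact ⟨x, fun _ => ⟨hx, h⟩⟩
    · exact ⟨x0, fun h => absurd h hc⟩
  choose px hpx using priv'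
  -- size bound via the cover
  have hXC : X'.card ≤ d * C.card := by
    have hsub : X' ⊆ C.biUnion (fun c => X'.filter (fun y => G.Adj c y)) := by
      intro x hx
      obtain ⟨c, hc, hadj⟩ := hCcov x hx
      exact Finset.mem_biUnion.mpr ⟨c, hc, Finset.mem_filter.mpr ⟨hx, hadj⟩⟩
    calc X'.card ≤ (C.biUnion (fun c => X'.filter (fun y => G.Adj c y))).card :=
          Finset.card_le_card hsub
      _ ≤ ∑ c ∈ C, (X'.filter (fun y => G.Adj c y)).card := Finset.card_biUnion_le
      _ ≤ ∑ _c ∈ C, d := Finset.sum_le_sum (fun c hc => hCd c hc)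
      _ = C.card * d := by rw [Finset.sum_const, smul_eq_mul]
      _ = d * C.card := Nat.mul_comm _ _
  -- rank bound
  have hCr : C.card ≤ cutRank G A := by
    set M := cutMatrix G A with hM
    have hCc : ∀ c : ↥C, (c : V) ∈ Aᶜ := fun c => Finset.mem_compl.mpr (hCnA _ c.2)
    set fam : ↥C → (↥A → ZMod 2) := fun c => M.mulVec (Pi.single ⟨(c : V), hCc c⟩ 1) with hfam
    have hfam_apply : ∀ (c : ↥C) (x : ↥A),
        fam c x = if G.Adj (x : V) (c : V) then 1 else 0 := by
      intro c x
      rw [hfam]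
      simp only [Matrix.mulVec_single, mul_one]
      rw [MulOpposite.op_one, one_smul]; rfl
    have hind : LinearIndependent (ZMod 2) fam := by
      rw [Fintype.linearIndependent_iff]
      intro g hg c₀
      have hpxX : px (c₀ : V) ∈ X' := (hpx _ c₀.2).1
      have hpxA : (px (c₀ : V)) ∈ A := hX'A hpxX
      have hev := congrFun hg ⟨px (c₀ : V), hpxA⟩
      rw [Finset.sum_apply] at hev
      rw [Finset.sum_eq_single c₀ ?h1 ?h2] at hev
      · rw [Pi.smul_apply, hfam_apply, if_pos ((hpx _ c₀.2).2.1).symm,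
          smul_eq_mul, mul_one] at hev
        exact hev
      case h1 =>
        intro c _ hne
        have hne' : (c : V) ≠ (c₀ : V) := fun h => hne (Subtype.coe_injective h)
        have hnadj : ¬ G.Adj (c : V) (px (c₀ : V)) := (hpx _ c₀.2).2.2 _ c.2 hne'
        have hnadj' : ¬ G.Adj (px (c₀ : V)) (c : V) := fun h => hnadj h.symm
        rw [Pi.smul_apply, hfam_apply, if_neg hnadj', smul_eq_mul, mul_zero]
      case h2 =>
        intro h
        exact absurd (Finset.mem_univ c₀) h
    have hspan : Submodule.span (ZMod 2) (Set.range fam) ≤ LinearMap.range M.mulVecLin := by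
      rw [Submodule.span_le]
      rintro _ ⟨c, rfl⟩
      exact ⟨Pi.single ⟨(c : V), hCc c⟩ 1, rfl⟩
    have h1 : Module.finrank (ZMod 2) (Submodule.span (ZMod 2) (Set.range fam))
        = Fintype.card ↥C := finrank_span_eq_card hind
    calc C.card = Fintype.card ↥C := (Fintype.card_coe C).symm
      _ = Module.finrank (ZMod 2) (Submodule.span (ZMod 2) (Set.range fam)) := h1.symm
      _ ≤ Module.finrank (ZMod 2) (LinearMap.range M.mulVecLin) :=
          Submodule.finrank_mono hspan
      _ = cutRank G A := rfl
  -- union-count bound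
  have hC2 : 2 ^ C.card ≤ unionCount G A := by
    set pw : Finset V → Set V :=
      fun S => (⋃ y ∈ ((S.image px : Finset V) : Set V), G.neighborSet y) \ ↑A with hpw
    have hmem_iff : ∀ S, S ⊆ C → ∀ c ∈ C, (c ∈ S ↔ c ∈ pw S) := by
      intro S hS c hc
      constructor
      · intro hcS
        refine ⟨?_, by simpa using hCnA c hc⟩
        refine Set.mem_biUnion (Finset.mem_coe.mpr (Finset.mem_image_of_mem px hcS)) ?_
        exact SimpleGraph.mem_neighborSet G (px c) c |>.mpr ((hpx _ hc).2.1).symm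
      · rintro ⟨hU, -⟩
        obtain ⟨y, hy, hcy⟩ := Set.mem_iUnion₂.mp hU
        obtain ⟨c', hc'S, rfl⟩ := Finset.mem_image.mp (Finset.mem_coe.mp hy)
        have hadj : G.Adj c (px c') :=
          ((SimpleGraph.mem_neighborSet G (px c') c).mp hcy).symm
        by_cases hcc : c = c'
        · exact hcc ▸ hc'S
        · exact absurd hadj ((hpx _ (hS hc'S)).2.2 c hc hcc)
    have hmapsto : ∀ S ∈ (↑C.powerset : Set (Finset V)), pw S ∈
        {S : Set V | ∃ Y : Set V, Y ⊆ ↑A ∧ (⋃ y ∈ Y, G.neighborSet y) \ ↑A = S} := by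
      intro S hS
      rw [Finset.mem_coe, Finset.mem_powerset] at hS
      refine ⟨((S.image px : Finset V) : Set V), ?_, rfl⟩
      intro y hy
      obtain ⟨c, hcS, rfl⟩ := Finset.mem_image.mp (Finset.mem_coe.mp hy)
      exact hX'A (hpx _ (hS hcS)).1
    have hinj : Set.InjOn pw (↑C.powerset : Set (Finset V)) := by
      intro S hS S' hS' hEq
      rw [Finset.mem_coe, Finset.mem_powerset] at hS hS'
      ext c
      constructor
      · intro hcS
        have hcC : c ∈ C := hS hcS
        exact (hmem_iff S' hS' c hcC).mpr (hEq ▸ (hmem_iff S hS c hcC).mp hcS)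
      · intro hcS'
        have hcC : c ∈ C := hS' hcS'
        exact (hmem_iff S hS c hcC).mpr (hEq ▸ (hmem_iff S' hS' c hcC).mp hcS')
    have hle := Set.ncard_le_ncard_of_injOn pw hmapsto hinj (Set.toFinite _)
    calc 2 ^ C.card = C.powerset.card := (Finset.card_powerset C).symm
      _ = (↑C.powerset : Set (Finset V)).ncard := (Set.ncard_coe_finset _).symm
      _ ≤ _ := hle
  have hClog : C.card ≤ Nat.log 2 (unionCount G A) :=
    (Nat.le_log_iff_pow_le one_lt_two (unionCount_ne_zero G A)).mpr hC2
  calc X'.card ≤ d * C.card := hXC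
    _ ≤ d * min (cutRank G A) (Nat.log 2 (unionCount G A)) :=
        Nat.mul_le_mul_left d (le_min hCr hClog)

lemma Rfin_card_le_pow (G : SimpleGraph V) (A : Finset V) :
    (insert (0 : ↥(Aᶜ) → ZMod 2) (A.image (rowFn G A))).card ≤ 2 ^ cutRank G A := by
  classical
  set M := cutMatrix G A with hM
  set Wsp := LinearMap.range (M.transpose).mulVecLin with hWsp
  have hsub : ((insert (0 : ↥(Aᶜ) → ZMod 2) (A.image (rowFn G A)) : Finset _) : Set _)
      ⊆ (Wsp : Set (↥(Aᶜ) → ZMod 2)) := by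
    intro w hw
    rcases Finset.mem_insert.mp (Finset.mem_coe.mp hw) with rfl | hw'
    · exact Wsp.zero_mem
    · obtain ⟨x, hxA, rfl⟩ := Finset.mem_image.mp hw'
      refine ⟨Pi.single (⟨x, hxA⟩ : ↥A) 1, ?_⟩
      rw [Matrix.mulVecLin_apply, Matrix.mulVec_single]
      funext v
      simp only [MulOpposite.op_one, one_smul]
      rfl
  letI : Fintype ↥Wsp := Fintype.ofFinite _
  have h1 : ((insert (0 : ↥(Aᶜ) → ZMod 2) (A.image (rowFn G A)) : Finset _) : Set _).ncard
      ≤ (Wsp : Set (↥(Aᶜ) → ZMod 2)).ncard :=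
        Set.ncard_le_ncard hsub (Set.toFinite (Wsp : Set (↥(Aᶜ) → ZMod 2)))
  have h2 : (Wsp : Set (↥(Aᶜ) → ZMod 2)).ncard = Fintype.card ↥Wsp := by
    rw [← Nat.card_coe_set_eq]
    exact Nat.card_eq_fintype_card
  have h3 : Fintype.card ↥Wsp = 2 ^ Module.finrank (ZMod 2) ↥Wsp := by
    have := Module.card_eq_pow_finrank (K := ZMod 2) (V := ↥Wsp)
    rwa [ZMod.card 2] at this
  have h4 : Module.finrank (ZMod 2) ↥Wsp = cutRank G A := by
    have : Module.finrank (ZMod 2) ↥Wsp = (M.transpose).rank := rfl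
    rw [this, Matrix.rank_transpose]
    rfl
  rw [Set.ncard_coe_finset] at h1
  rw [h2, h3, h4] at h1
  exact h1

lemma Rfin_card_le_unionCount (G : SimpleGraph V) (A : Finset V) :
    (insert (0 : ↥(Aᶜ) → ZMod 2) (A.image (rowFn G A))).card ≤ unionCount G A := by
  classical
  set supp : (↥(Aᶜ) → ZMod 2) → Set V := fun w => {v | ∃ h : v ∈ Aᶜ, w ⟨v, h⟩ = 1} with hsupp
  have key : ∀ (w : ↥(Aᶜ) → ZMod 2) (v : ↥(Aᶜ)), ((v : V) ∈ supp w ↔ w v = 1) := by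
    intro w v
    constructor
    · rintro ⟨h, hw⟩
      rwa [Subtype.coe_eta] at hw
    · intro h
      exact ⟨v.2, by rwa [Subtype.coe_eta]⟩
  have hinj : Function.Injective supp := by
    intro w w' h
    funext v
    have h01 : ∀ a : ZMod 2, a = 0 ∨ a = 1 := by decide
    have hiff : ((v : V) ∈ supp w ↔ (v : V) ∈ supp w') := by rw [h]
    rw [key, key] at hiff
    rcases h01 (w v) with h1 | h1 <;> rcases h01 (w' v) with h2 | h2 <;>
      simp_all
  have hmaps : ∀ w ∈ ((insert (0 : ↥(Aᶜ) → ZMod 2) (A.image (rowFn G A)) : Finset _) : Set _),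
      supp w ∈ {S : Set V | ∃ Y : Set V, Y ⊆ ↑A ∧ (⋃ y ∈ Y, G.neighborSet y) \ ↑A = S} := by
    intro w hw
    rcases Finset.mem_insert.mp (Finset.mem_coe.mp hw) with rfl | hw'
    · refine ⟨(∅ : Set V), Set.empty_subset _, ?_⟩
      ext v
      simp [hsupp]
    · obtain ⟨x, hxA, rfl⟩ := Finset.mem_image.mp hw'
      refine ⟨({x} : Set V), by simpa using hxA, ?_⟩
      ext v
      simp only [Set.mem_singleton_iff, Set.iUnion_iUnion_eq_left, Set.mem_diff,
        SimpleGraph.mem_neighborSet, hsupp, Set.mem_setOf_eq, Finset.mem_coe]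
      constructor
      · rintro ⟨hadj, hvA⟩
        have hvc : v ∈ Aᶜ := Finset.mem_compl.mpr hvA
        refine ⟨hvc, ?_⟩
        show (if G.Adj x v then (1 : ZMod 2) else 0) = 1
        rw [if_pos hadj]
      · rintro ⟨hvc, hone⟩
        have : (if G.Adj x v then (1 : ZMod 2) else 0) = 1 := hone
        constructor
        · by_contra hna
          rw [if_neg hna] at this
          exact zero_ne_one this
        · exact Finset.mem_compl.mp hvc
  have := Set.ncard_le_ncard_of_injOn supp hmaps (hinj.injOn) (Set.toFinite _)
  rwa [Set.ncard_coe_finset] at this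

lemma dNbEquiv_refl (G : SimpleGraph V) (A : Finset V) (d : ℕ) (X : Finset V) :
    dNbEquiv G A d X X := fun _ _ => rfl

lemma numD_le_sig (G : SimpleGraph V) (A : Finset V) (d : ℕ) :
    numDNbClasses G A d ≤ (sigFn G A d '' {X : Finset V | X ⊆ A}).ncard := by
  classical
  set f : Set (Finset V) → (V → ℕ) :=
    fun C => if h : C.Nonempty then sigFn G A d h.some else (fun _ => 0) with hf
  have hclass : ∀ (X : Finset V), X ⊆ A →
      f {X' : Finset V | X' ⊆ A ∧ dNbEquiv G A d X X'} = sigFn G A d X := by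
    intro X hXA
    have hne : {X' : Finset V | X' ⊆ A ∧ dNbEquiv G A d X X'}.Nonempty :=
      ⟨X, hXA, dNbEquiv_refl G A d X⟩
    rw [hf]
    simp only [dif_pos hne]
    have := hne.some_mem
    exact ((dNbEquiv_iff_sig G A d X _).mp this.2).symm
  apply Set.ncard_le_ncard_of_injOn f ?_ ?_ ((Set.toFinite _).image _)
  · rintro C ⟨X, hXA, rfl⟩
    rw [hclass X hXA]
    exact ⟨X, hXA, rfl⟩
  · rintro C ⟨X, hXA, rfl⟩ C' ⟨X₁, hX₁A, rfl⟩ hEq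
    rw [hclass X hXA, hclass X₁ hX₁A] at hEq
    ext X''
    simp only [Set.mem_setOf_eq]
    constructor
    · rintro ⟨h1, h2⟩
      refine ⟨h1, ?_⟩
      rw [dNbEquiv_iff_sig] at h2 ⊢
      rw [← hEq]
      exact h2
    · rintro ⟨h1, h2⟩
      refine ⟨h1, ?_⟩
      rw [dNbEquiv_iff_sig] at h2 ⊢
      rw [hEq]
      exact h2

end Graph

/-! ### Main theorem -/

theorem numDNbClasses_le {V : Type*} [Fintype V] [DecidableEq V]
    (G : SimpleGraph V) (A : Finset V) (d : ℕ) (hd : 1 ≤ d)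
    (r U : ℕ) (hr : r = cutRank G A) (hU : U = unionCount G A) :
    numDNbClasses G A d ≤ 2 ^ (d * r ^ 2 + r) ∧
      (numDNbClasses G A d : ℝ) ≤
        (U : ℝ) ^ ((d : ℝ) * Real.logb 2 (U : ℝ) + 1) := by
  classical
  set L := Nat.log 2 U with hL
  set k := d * min r L with hk
  set Rfin : Finset (↥(Aᶜ) → ZMod 2) := insert 0 (A.image (rowFn G A)) with hRfin
  set small : Set (Finset V) := {X : Finset V | X ⊆ A ∧ X.card ≤ k} with hsmall
  set Enc : Finset V → Multiset (↥(Aᶜ) → ZMod 2) := fun X =>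
    (k - ∑ w : ↥(Aᶜ) → ZMod 2, countFn G A d X w) • ({0} : Multiset _)
      + ∑ w : ↥(Aᶜ) → ZMod 2, countFn G A d X w • ({w} : Multiset _) with hEnc
  have hsum_le : ∀ X : Finset V, (∑ w : ↥(Aᶜ) → ZMod 2, countFn G A d X w) ≤ X.card := by
    intro X
    have h1 : ∀ w, countFn G A d X w ≤ (X.filter (fun x => rowFn G A x = w)).card := by
      intro w
      simp only [countFn]
      split
      · exact Nat.zero_le _
      · exact min_le_left _ _
    calc ∑ w : ↥(Aᶜ) → ZMod 2, countFn G A d X w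
        ≤ ∑ w : ↥(Aᶜ) → ZMod 2, (X.filter (fun x => rowFn G A x = w)).card :=
          Finset.sum_le_sum (fun w _ => h1 w)
      _ = X.card :=
          (Finset.card_eq_sum_card_fiberwise (fun x _ => Finset.mem_univ (rowFn G A x))).symm
  have hcount_enc : ∀ (X : Finset V), ∀ w, w ≠ 0 →
      (Enc X).count w = countFn G A d X w := by
    intro X w hw
    rw [hEnc]
    simp only []
    rw [Multiset.count_add, Multiset.count_nsmul, Multiset.count_singleton, if_neg hw,
      mul_zero, zero_add, Multiset.count_sum']
    rw [Finset.sum_eq_single_of_mem w (Finset.mem_univ w)]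
    · rw [Multiset.count_nsmul, Multiset.count_singleton, if_pos rfl, mul_one]
    · intro w' _ hww'
      rw [Multiset.count_nsmul, Multiset.count_singleton, if_neg (fun h => hww' h.symm),
        mul_zero]
  have hrefine : ∀ X ∈ small, ∀ Y ∈ small, Enc X = Enc Y →
      sigFn G A d X = sigFn G A d Y := by
    intro X _ Y _ hEq
    apply sig_eq_of_countFn_eq
    funext w
    by_cases hw : w = 0
    · subst hw; simp [countFn]
    · rw [← hcount_enc X w hw, ← hcount_enc Y w hw, hEq]
  have hEnc_mem : ∀ X ∈ small, Enc X ∈ {m : Multiset (↥(Aᶜ) → ZMod 2) |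
      Multiset.card m = k ∧ ∀ x ∈ m, x ∈ Rfin} := by
    intro X hX
    obtain ⟨hXA, hXk⟩ := hX
    constructor
    · rw [hEnc]
      simp only []
      rw [Multiset.card_add, Multiset.card_nsmul, Multiset.card_singleton, mul_one,
        aux_card_finsum]
      simp only [Multiset.card_nsmul, Multiset.card_singleton, mul_one]
      have := le_trans (hsum_le X) hXk
      omega
    · intro x hx
      rw [hEnc] at hx
      simp only [] at hx
      rcases Multiset.mem_add.mp hx with hx | hx
      · have := (Multiset.mem_nsmul.mp hx).2
        rw [Multiset.mem_singleton.mp this]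
        exact Finset.mem_insert_self _ _
      · obtain ⟨w, -, hxw⟩ := Multiset.mem_sum.mp hx
        have h2 := Multiset.mem_nsmul.mp hxw
        rw [Multiset.mem_singleton.mp h2.2]
        have hcw : countFn G A d X w ≠ 0 := h2.1
        by_cases hw0 : w = 0
        · subst hw0
          simp only [countFn, if_pos rfl] at hcw
          exact absurd rfl hcw
        · simp only [countFn, if_neg hw0] at hcw
          have hne : (X.filter (fun x => rowFn G A x = w)).card ≠ 0 := by
            intro h
            rw [h] at hcw
            simp at hcw
          obtain ⟨x', hx'⟩ := Finset.card_ne_zero.mp hne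
          rw [Finset.mem_filter] at hx'
          refine Finset.mem_insert_of_mem ?_
          exact hx'.2 ▸ Finset.mem_image_of_mem _ (hXA hx'.1)
  have main : numDNbClasses G A d ≤ Rfin.card ^ k := by
    calc numDNbClasses G A d
        ≤ (sigFn G A d '' {X : Finset V | X ⊆ A}).ncard := numD_le_sig G A d
      _ ≤ (sigFn G A d '' small).ncard := by
          apply Set.ncard_le_ncard ?_ ((Set.toFinite small).image _)
          rintro σ ⟨X, hXA, rfl⟩
          obtain ⟨X', h1, h2, h3⟩ := exists_small_rep G A d X hXA
          exact ⟨X', ⟨h1, by rw [hk, hL, hr, hU]; exact h3⟩, h2⟩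
      _ ≤ (Enc '' small).ncard :=
          aux_ncard_image_le_image_of_refines small (Set.toFinite _) _ _ hrefine
      _ ≤ Set.ncard {m : Multiset (↥(Aᶜ) → ZMod 2) |
            Multiset.card m = k ∧ ∀ x ∈ m, x ∈ Rfin} :=
          Set.ncard_le_ncard (by rintro m ⟨X, hX, rfl⟩; exact hEnc_mem X hX)
            (aux_multisets_finite Rfin k)
      _ ≤ Rfin.card ^ k := aux_ncard_multisets_le Rfin k
  have hR1 : Rfin.card ≤ 2 ^ r := by rw [hr]; exact Rfin_card_le_pow G A
  have hR2 : Rfin.card ≤ U := by rw [hU]; exact Rfin_card_le_unionCount G A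
  have hU1 : 1 ≤ U := by
    rw [hU]
    exact Nat.one_le_iff_ne_zero.mpr (unionCount_ne_zero G A)
  constructor
  · calc numDNbClasses G A d ≤ Rfin.card ^ k := main
      _ ≤ (2 ^ r) ^ k := Nat.pow_le_pow_left hR1 k
      _ = 2 ^ (r * k) := by rw [← pow_mul]
      _ ≤ 2 ^ (d * r ^ 2 + r) := by
          apply Nat.pow_le_pow_right (by norm_num)
          have hmin : min r L ≤ r := min_le_left _ _
          calc r * k = r * (d * min r L) := by rw [hk]
            _ ≤ r * (d * r) := Nat.mul_le_mul_left r (Nat.mul_le_mul_left d hmin)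
            _ = d * r ^ 2 := by ring
            _ ≤ d * r ^ 2 + r := Nat.le_add_right _ _
  · have hNk : numDNbClasses G A d ≤ U ^ (d * L) := by
      calc numDNbClasses G A d ≤ Rfin.card ^ k := main
        _ ≤ U ^ k := Nat.pow_le_pow_left hR2 k
        _ ≤ U ^ (d * L) := Nat.pow_le_pow_right hU1
            (by rw [hk]; exact Nat.mul_le_mul_left d (min_le_right _ _))
    rcases eq_or_lt_of_le hU1 with hUeq | hU2
    · have h1 : numDNbClasses G A d ≤ 1 := by
        rw [← hUeq] at hNk
        simpa using hNk
      rw [← hUeq]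
      push_cast
      calc (numDNbClasses G A d : ℝ) ≤ 1 := by exact_mod_cast h1
        _ = (1 : ℝ) ^ ((d : ℝ) * Real.logb 2 (1 : ℝ) + 1) := (Real.one_rpow _).symm
    · have hU2' : (2 : ℕ) ≤ U := hU2
      have hLle : (L : ℝ) ≤ Real.logb 2 (U : ℝ) := by
        have h2L : (2 : ℝ) ^ (L : ℕ) ≤ (U : ℝ) := by
          exact_mod_cast Nat.pow_log_le_self 2 (by omega)
        have := Real.logb_le_logb_of_le (b := 2) (by norm_num) (by positivity) h2L
        rwa [← Real.rpow_natCast 2 L, Real.logb_rpow (by norm_num) (by norm_num)] at this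
      calc (numDNbClasses G A d : ℝ) ≤ ((U ^ (d * L) : ℕ) : ℝ) := by exact_mod_cast hNk
        _ = (U : ℝ) ^ (((d * L : ℕ)) : ℝ) := by
            rw [Real.rpow_natCast]
            push_cast
            ring
        _ ≤ (U : ℝ) ^ ((d : ℝ) * Real.logb 2 (U : ℝ) + 1) := by
            apply Real.rpow_le_rpow_of_exponent_le (by exact_mod_cast hU1)
            push_cast
            have hd0 : (0 : ℝ) ≤ (d : ℝ) := by positivity
            nlinarith [mul_le_mul_of_nonneg_left hLle hd0]
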